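/- For any real x, the following are equivalent: (1) x is Δ¹₁-semi-traceable and Δ¹₁-dominated; (2) for every g ≤_h x there exist an increasing Δ¹₁ function f and a Δ¹₁ function F : ω → [ω]^{<ω} with |F(n)| ≤ n for all n, such that for every n there exists m ∈ [f(n), f(n+1)) with g(m) ∈ F(m). -/

import Mathlib

open scoped ENNReal Classical
open MeasureTheory

/-- Cantor space `2^ω`. -/
abbrev Cantor : Type := ℕ → Bool
/-- Baire space `ω^ω`. -/
abbrev Baire : Type := ℕ → ℕ

/-- The initial segment `x ↾ k` of a real, as a list. -/
def Cantor.initSeg (x : Cantor) (k : ℕ) : List Bool := List.ofFn (fun i : Fin k => x i)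

/-- The initial segment `f ↾ k` of an element of Baire space. -/
def Baire.initSeg (f : Baire) (k : ℕ) : List ℕ := List.ofFn (fun i : Fin k => f i)

/-- The basic clopen cylinder `[σ]` determined by a finite binary string. -/
def cylinder (σ : List Bool) : Set Cantor := {x | x.initSeg σ.length = σ}

/-- `μ` is the uniform (coin-flipping) measure on Cantor space: every cylinder
`[σ]` gets measure `2^{-|σ|}`.  (This characterizes the measure uniquely.) -/
def IsCantorMeasure (μ : Measure Cantor) : Prop :=
  ∀ σ : List Bool, μ (cylinder σ) = 2⁻¹ ^ σ.length

/-- `A` is recursively enumerable in the oracle `x : 2^ω`:  membership is witnessed by the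
halting of a partial recursive function on some initial segment of the oracle. -/
def REIn {α : Type} [Primcodable α] (x : Cantor) (A : Set α) : Prop :=
  ∃ ψ : α × List Bool →. Unit, Partrec ψ ∧ ∀ a, a ∈ A ↔ ∃ k, (ψ (a, x.initSeg k)).Dom

/-- A total function `f : ω → ω` is Turing reducible to `x` iff its graph is r.e. in `x`. -/
def TuringLEFun (f : ℕ → ℕ) (x : Cantor) : Prop :=
  ∃ ψ : ℕ × List Bool →. ℕ, Partrec ψ ∧ ∀ n m, f n = m ↔ ∃ k, m ∈ ψ (n, x.initSeg k)

/-- A real viewed as a function `ω → ω`. -/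
def Cantor.toFun (y : Cantor) : ℕ → ℕ := fun n => cond (y n) 1 0

/-- Turing reducibility `y ≤_T x` between reals. -/
def TuringLE (y x : Cantor) : Prop := TuringLEFun y.toFun x

/-- Turing equivalence `y ≡_T x`. -/
def TuringEquiv (y x : Cantor) : Prop := TuringLE y x ∧ TuringLE x y

/-- The halting set relative to the oracle `x` (a set Turing-equivalent to the jump `x'`):
`⟨e,n⟩` belongs to it iff the `e`-th partial recursive function halts on `(n, σ)`
for some initial segment `σ` of `x`. -/
def jumpSet (x : Cantor) : Set ℕ :=
  {e | ∃ k, ((Denumerable.ofNat Nat.Partrec.Code e.unpair.1).eval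
      (Nat.pair e.unpair.2 (Encodable.encode (x.initSeg k)))).Dom}

/-- The Turing jump `x'` of `x`, as a real. -/
noncomputable def Cantor.jump (x : Cantor) : Cantor :=
  fun n => if n ∈ jumpSet x then true else false

/-- `U ⊆ 2^ω` is `Σ⁰₁(x)`: an effectively open set relative to `x`. -/
def Sigma01In (x : Cantor) (U : Set Cantor) : Prop :=
  ∃ W : Set (List Bool), REIn x W ∧ U = ⋃ σ ∈ W, cylinder σ

/-- `C ⊆ 2^ω` is `Π⁰₁(x)`: an effectively closed set relative to `x`. -/
def Pi01In (x : Cantor) (C : Set Cantor) : Prop := Sigma01In x Cᶜ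

/-- `y` is `x`-Kurtz random: `y` avoids every `Π⁰₁(x)` null class. -/
def KurtzRandomIn (x : Cantor) (μ : Measure Cantor) (y : Cantor) : Prop :=
  ∀ C : Set Cantor, Pi01In x C → μ C = 0 → y ∉ C

/-- The trivial (recursive) oracle. -/
def recOracle : Cantor := fun _ => false

/-- `A ⊆ 2^ω` is `Π¹₁(x)` (lightface, relativized to `x`), via the Kleene normal form
`y ∈ A ↔ ∀ f ∃ n R(x↾n, y↾n, f↾n)` with `R` recursive. -/
def Pi11In (x : Cantor) (A : Set Cantor) : Prop :=
  ∃ R : List Bool × List Bool × List ℕ → Bool, Computable R ∧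
    ∀ y : Cantor, y ∈ A ↔ ∀ f : Baire, ∃ n, R (x.initSeg n, y.initSeg n, f.initSeg n) = true

/-- `A ⊆ 2^ω` is `Σ¹₁(x)` (lightface analytic relative to `x`). -/
def Sigma11In (x : Cantor) (A : Set Cantor) : Prop :=
  ∃ R : List Bool × List Bool × List ℕ → Bool, Computable R ∧
    ∀ y : Cantor, y ∈ A ↔ ∃ f : Baire, ∀ n, R (x.initSeg n, y.initSeg n, f.initSeg n) = true

/-- `A ⊆ 2^ω` is `Δ¹₁(x)` (hyperarithmetic in `x`). -/
def Delta11In (x : Cantor) (A : Set Cantor) : Prop := Pi11In x A ∧ Sigma11In x A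

abbrev Pi11 : Set Cantor → Prop := Pi11In recOracle
abbrev Sigma11 : Set Cantor → Prop := Sigma11In recOracle
abbrev Delta11 : Set Cantor → Prop := Delta11In recOracle

/-- `A ⊆ ω` is `Π¹₁(x)`. -/
def Pi11NatIn (x : Cantor) (A : Set ℕ) : Prop :=
  ∃ R : ℕ × List Bool × List ℕ → Bool, Computable R ∧
    ∀ a, a ∈ A ↔ ∀ f : Baire, ∃ n, R (a, x.initSeg n, f.initSeg n) = true

/-- `A ⊆ ω` is `Σ¹₁(x)`. -/
def Sigma11NatIn (x : Cantor) (A : Set ℕ) : Prop :=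
  ∃ R : ℕ × List Bool × List ℕ → Bool, Computable R ∧
    ∀ a, a ∈ A ↔ ∃ f : Baire, ∀ n, R (a, x.initSeg n, f.initSeg n) = true

abbrev Pi11Nat : Set ℕ → Prop := Pi11NatIn recOracle
abbrev Sigma11Nat : Set ℕ → Prop := Sigma11NatIn recOracle

/-- `A ⊆ ω` is `Δ¹₁`. -/
def Delta11Nat (A : Set ℕ) : Prop := Pi11Nat A ∧ Sigma11Nat A

/-- `A ⊆ ω` is `Σ¹₂`, via the normal form `∃ f ∀ g ∃ n R`. -/
def Sigma12Nat (A : Set ℕ) : Prop :=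
  ∃ R : ℕ × List ℕ × List ℕ → Bool, Computable R ∧
    ∀ a, a ∈ A ↔ ∃ f : Baire, ∀ g : Baire, ∃ n, R (a, f.initSeg n, g.initSeg n) = true

/-- `A ⊆ ω` is `Δ¹₂`. -/
def Delta12Nat (A : Set ℕ) : Prop := Sigma12Nat A ∧ Sigma12Nat Aᶜ

/-- Hyperarithmetic reducibility `y ≤_h x` between reals: `y` is `Δ¹₁(x)`. -/
def HypLE (y x : Cantor) : Prop :=
  Pi11NatIn x {n | y n = true} ∧ Pi11NatIn x {n | y n = false}

/-- Hyperarithmetic equivalence `x ≡_h y`. -/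
def HypEquiv (x y : Cantor) : Prop := HypLE x y ∧ HypLE y x

/-- `f ≤_h x` for a total function `f : ω → ω`: the graph of `f` is `Δ¹₁(x)`. -/
def HypLEFun (f : ℕ → ℕ) (x : Cantor) : Prop :=
  Pi11NatIn x {p | f p.unpair.1 = p.unpair.2} ∧ Pi11NatIn x {p | f p.unpair.1 ≠ p.unpair.2}

/-- A hyperarithmetic (`Δ¹₁`) real. -/
def Delta11Real (y : Cantor) : Prop := HypLE y recOracle

/-- A hyperarithmetic (`Δ¹₁`) function. -/
def Delta11Fun (f : ℕ → ℕ) : Prop := HypLEFun f recOracle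

/-- `y` is `Δ¹₁(x)`-Kurtz random: avoids every closed null `Δ¹₁(x)` set. -/
def Delta11KurtzRandomIn (x : Cantor) (μ : Measure Cantor) (y : Cantor) : Prop :=
  ∀ A : Set Cantor, Delta11In x A → IsClosed A → μ A = 0 → y ∉ A

/-- `y` is `Δ¹₁`-Kurtz random. -/
abbrev Delta11KurtzRandom (μ : Measure Cantor) (y : Cantor) : Prop :=
  Delta11KurtzRandomIn recOracle μ y

/-- `y` is `Π¹₁(x)`-Kurtz random: avoids every closed null `Π¹₁(x)` set. -/
def Pi11KurtzRandomIn (x : Cantor) (μ : Measure Cantor) (y : Cantor) : Prop :=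
  ∀ A : Set Cantor, Pi11In x A → IsClosed A → μ A = 0 → y ∉ A

/-- `y` is `Π¹₁`-Kurtz random. -/
abbrev Pi11KurtzRandom (μ : Measure Cantor) (y : Cantor) : Prop :=
  Pi11KurtzRandomIn recOracle μ y

/-- `y` is `Σ¹₁`-Kurtz random: avoids every closed null `Σ¹₁` set. -/
def Sigma11KurtzRandom (μ : Measure Cantor) (y : Cantor) : Prop :=
  ∀ A : Set Cantor, Sigma11 A → IsClosed A → μ A = 0 → y ∉ A

/-- `y` is `Π¹₁`-random: avoids every `Π¹₁` null set. -/
def Pi11Random (μ : Measure Cantor) (y : Cantor) : Prop :=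
  ∀ A : Set Cantor, Pi11 A → μ A = 0 → y ∉ A

/-- The ordinal `α` is the order type of a wellordering (of a subset of `ω`) recursive in `x`. -/
def OrdRecIn (x : Cantor) (α : Ordinal.{0}) : Prop :=
  ∃ R : ℕ → ℕ → Prop,
    TuringLEFun (fun p => if R p.unpair.1 p.unpair.2 then 1 else 0) x ∧
    ∃ inst : IsWellOrder {n : ℕ | ∃ m, R n m ∨ R m n}
        (fun a b : {n : ℕ | ∃ m, R n m ∨ R m n} => R a.1 b.1),
      α = @Ordinal.type _ (fun a b : {n : ℕ | ∃ m, R n m ∨ R m n} => R a.1 b.1) inst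

/-- `ω₁^x`: the least ordinal not (the order type of a wellordering) recursive in `x`. -/
noncomputable def omega1 (x : Cantor) : Ordinal := sInf {α : Ordinal | ¬ OrdRecIn x α}

/-- The Church–Kleene ordinal `ω₁^CK`. -/
noncomputable def omega1CK : Ordinal := omega1 recOracle

/-- `A ⊆ ω^ω` is (lightface) `Π¹₁`. -/
def Pi11Baire (A : Set Baire) : Prop :=
  ∃ R : List ℕ × List ℕ → Bool, Computable R ∧
    ∀ y, y ∈ A ↔ ∀ f : Baire, ∃ n, R (y.initSeg n, f.initSeg n) = true

/-- `x ∈ ω^ω` is a `Π¹₁` singleton. -/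
def Pi11Singleton (x : Baire) : Prop := Pi11Baire {x}

/-- An element of Baire space coded as a real (via the graph). -/
def Baire.toCantor (x : Baire) : Cantor := fun n => decide (x n.unpair.1 = n.unpair.2)

/-- `Q ⊆ ω × 2^ω` is `Π¹₁`. -/
def Pi11NatCantor (Q : Set (ℕ × Cantor)) : Prop :=
  ∃ R : ℕ × List Bool × List ℕ → Bool, Computable R ∧
    ∀ (a : ℕ) (x : Cantor),
      (a, x) ∈ Q ↔ ∀ f : Baire, ∃ n, R (a, x.initSeg n, f.initSeg n) = true

/-- `Q` is a universal `Π¹₁` subset of `ω × 2^ω`. -/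
def UniversalPi11 (Q : Set (ℕ × Cantor)) : Prop :=
  Pi11NatCantor Q ∧ ∀ A : Set Cantor, Pi11 A → ∃ n, A = {x | (n, x) ∈ Q}

/-- The set of codes `⟨n, σ⟩` with `μ(Q_n) = 0` and `σ ≺ x` for some `x ∈ Q_n`;
this codes all `Π¹₁` closed null sets. -/
def cSet (μ : Measure Cantor) (Q : Set (ℕ × Cantor)) : Set ℕ :=
  {p | μ {x : Cantor | (p.unpair.1, x) ∈ Q} = 0 ∧
    ∃ σ : List Bool, Encodable.encode σ = p.unpair.2 ∧
      ∃ x : Cantor, (p.unpair.1, x) ∈ Q ∧ x.initSeg σ.length = σ}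

/-- The real `𝔠` coding all `Π¹₁` closed null sets. -/
noncomputable def cReal (μ : Measure Cantor) (Q : Set (ℕ × Cantor)) : Cantor :=
  fun n => if n ∈ cSet μ Q then true else false

/-- `x` is `Δ¹₁`-dominated (hyp-dominated): every `f ≤_h x` is dominated by a
hyperarithmetic function. -/
def Delta11Dominated (x : Cantor) : Prop :=
  ∀ f : ℕ → ℕ, HypLEFun f x → ∃ g : ℕ → ℕ, Delta11Fun g ∧ ∀ n, f n < g n

/-- `x` is `Δ¹₁`-semi-traceable: every `f ≤_h x` agrees infinitely often with some
hyperarithmetic function. -/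
def Delta11SemiTraceable (x : Cantor) : Prop :=
  ∀ f : ℕ → ℕ, HypLEFun f x → ∃ g : ℕ → ℕ, Delta11Fun g ∧ {n | f n = g n}.Infinite

/-- A partial `Π¹₁` function: a partial function `ω ⇀ ω` with `Π¹₁` graph. -/
def PartialPi11 (p : ℕ →. ℕ) : Prop := Pi11Nat {q | q.unpair.2 ∈ p q.unpair.1}

/-- `x` is `Π¹₁`-semi-traceable: every `f ≤_h x` agrees infinitely often with some
partial `Π¹₁` function. -/
def Pi11SemiTraceable (x : Cantor) : Prop :=
  ∀ f : ℕ → ℕ, HypLEFun f x → ∃ p : ℕ →. ℕ, PartialPi11 p ∧ {n | f n ∈ p n}.Infinite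

/-- A uniformly `Δ¹₁` sequence of finite sets, coded as a `Δ¹₁` function. -/
def Delta11FinsetFun (T : ℕ → Finset ℕ) : Prop :=
  Delta11Fun (fun e => Encodable.encode (T e))

/-- `x` is `Δ¹₁`-traceable: for some (equivalently, every) monotone unbounded `Δ¹₁` bound `h`,
every `f ≤_h x` has a uniformly `Δ¹₁` trace `(T_e)` with `|T_e| ≤ h(e)` and `f(e) ∈ T_e`. -/
def Delta11Traceable (x : Cantor) : Prop :=
  ∃ h : ℕ → ℕ, Delta11Fun h ∧ Monotone h ∧ (∀ m, ∃ n, m ≤ h n) ∧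
    ∀ f : ℕ → ℕ, HypLEFun f x →
      ∃ T : ℕ → Finset ℕ, Delta11FinsetFun T ∧ (∀ e, (T e).card ≤ h e) ∧ ∀ e, f e ∈ T e

/-- `x` is low for `Δ¹₁`-Kurtz randomness. -/
def LowForDelta11Kurtz (μ : Measure Cantor) (x : Cantor) : Prop :=
  ∀ y : Cantor, Delta11KurtzRandomIn x μ y → Delta11KurtzRandom μ y

/-- `y` is `Δ¹₁(x)`-random: avoids every `Δ¹₁(x)` null set. -/
def Delta11RandomIn (x : Cantor) (μ : Measure Cantor) (y : Cantor) : Prop :=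
  ∀ A : Set Cantor, Delta11In x A → μ A = 0 → y ∉ A

/-- `x` is low for `Δ¹₁`-randomness. -/
def LowForDelta11Random (μ : Measure Cantor) (x : Cantor) : Prop :=
  ∀ y : Cantor, Delta11RandomIn x μ y → Delta11RandomIn recOracle μ y

/-- `x` is low for `Π¹₁`-Kurtz randomness. -/
def LowForPi11Kurtz (μ : Measure Cantor) (x : Cantor) : Prop :=
  ∀ y : Cantor, Pi11KurtzRandomIn x μ y → Pi11KurtzRandom μ y

/-- `x` is low for `Δ¹₁`-Kurtz tests: every `Δ¹₁(x)` open set of measure 1 contains a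
`Δ¹₁` open set of measure 1. -/
def LowForDelta11KurtzTests (μ : Measure Cantor) (x : Cantor) : Prop :=
  ∀ U : Set Cantor, Delta11In x U → IsOpen U → μ U = 1 →
    ∃ V : Set Cantor, Delta11 V ∧ IsOpen V ∧ V ⊆ U ∧ μ V = 1

/-- `δ¹₂`: the supremum of the order types of `Δ¹₂` wellorderings of `ω`. -/
noncomputable def delta12Ord : Ordinal :=
  sSup {α : Ordinal | ∃ R : ℕ → ℕ → Prop,
    Delta12Nat {p | R p.unpair.1 p.unpair.2} ∧
    ∃ inst : IsWellOrder ℕ R, α = @Ordinal.type _ R inst}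

/-- `m` is an output of the `e`-th partial recursive function on input `n`. -/
def codeEvalRel (e n m : ℕ) : Prop :=
  m ∈ (Denumerable.ofNat Nat.Partrec.Code e).eval n

mutual
/-- Membership in Kleene's `O` (the set of ordinal notations). -/
inductive KO : ℕ → Prop
  | one : KO 1
  | succ (a : ℕ) : KO a → KO (2 ^ a)
  | lim (e : ℕ) : (∀ n, ∃ m, codeEvalRel e n m) →
      (∀ n m, codeEvalRel e n m → KO m) →
      (∀ n m m', codeEvalRel e n m → codeEvalRel e (n + 1) m' → KOlt m m') →
      KO (3 * 5 ^ e)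
/-- The ordering `<_O` on Kleene's `O`. -/
inductive KOlt : ℕ → ℕ → Prop
  | lt_succ (a : ℕ) : KOlt a (2 ^ a)
  | lt_lim (e n m : ℕ) : codeEvalRel e n m → KOlt m (3 * 5 ^ e)
  | trans (a b c : ℕ) : KOlt a b → KOlt b c → KOlt a c
end

/-- Kleene's `O` as a real. -/
noncomputable def OReal : Cantor := fun n => if KO n then true else false

/-- A `Π¹₁`-ML-test for the measure `μ`. -/
def Pi11MLTest (μ : Measure Cantor) (G : ℕ → Set Cantor) : Prop :=
  (∀ m, IsOpen (G m)) ∧ (∀ m, μ (G m) ≤ 2⁻¹ ^ m) ∧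
  Pi11Nat {p | ∃ σ : List Bool,
    Encodable.encode σ = p.unpair.2 ∧ cylinder σ ⊆ G p.unpair.1}

/-- `x` is `Π¹₁`-ML-random. -/
def Pi11MLRandom (μ : Measure Cantor) (x : Cantor) : Prop :=
  ∀ G : ℕ → Set Cantor, Pi11MLTest μ G → x ∉ ⋂ m, G m

/-! ### Auxiliary development for Statement 15 -/

namespace S15

/-- Bounded existential as a boolean, via `Nat.rec`. -/
def bAny (N : ℕ) (p : ℕ → Bool) : Bool := Nat.rec false (fun i r => p i || r) N

@[simp] theorem bAny_zero {p} : bAny 0 p = false := rfl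
@[simp] theorem bAny_succ {N p} : bAny (N + 1) p = (p N || bAny N p) := rfl

theorem bAny_iff {N : ℕ} {p : ℕ → Bool} : bAny N p = true ↔ ∃ i, i < N ∧ p i = true := by
  induction N with
  | zero => simp
  | succ N ih =>
    simp only [bAny_succ, Bool.or_eq_true, ih]
    constructor
    · rintro (h | ⟨i, hi, h⟩)
      exacts [⟨N, Nat.lt_succ_self _, h⟩, ⟨i, hi.trans (Nat.lt_succ_self _), h⟩]
    · rintro ⟨i, hi, h⟩
      rcases Nat.lt_succ_iff_lt_or_eq.1 hi with hi | rfl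
      exacts [Or.inr ⟨i, hi, h⟩, Or.inl h]

/-- Build the list `[F 0, F 1, ..., F (m-1)]` via `Nat.rec`. -/
def buildL {β : Type} (m : ℕ) (F : ℕ → β) : List β :=
  Nat.rec [] (fun k l => l ++ [F k]) m

@[simp] theorem buildL_zero {β : Type} {F : ℕ → β} : buildL 0 F = [] := rfl
@[simp] theorem buildL_succ {β : Type} {m} {F : ℕ → β} :
    buildL (m + 1) F = buildL m F ++ [F m] := rfl

theorem buildL_eq {β : Type} (m : ℕ) (F : ℕ → β) : buildL m F = (List.range m).map F := by
  induction m with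
  | zero => rfl
  | succ m ih => simp [List.range_succ, ih]

@[simp] theorem buildL_length {β : Type} (m : ℕ) (F : ℕ → β) : (buildL m F).length = m := by
  simp [buildL_eq]

theorem buildL_getElem {β : Type} {m i : ℕ} (F : ℕ → β) (h : i < m) :
    (buildL m F)[i]'(by simpa using h) = F i := by
  simp [buildL_eq]

/-- Decode a natural number as a list of naturals (with default `[]`). -/
def decodeList (c : ℕ) : List ℕ := (Encodable.decode (α := List ℕ) c).getD []

@[simp] theorem decodeList_encode (l : List ℕ) : decodeList (Encodable.encode l) = l := by
  simp [decodeList, Encodable.encodek]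

section PrimrecHelpers

open Primrec

variable {α : Type} {β : Type} [Primcodable α] [Primcodable β]

theorem primrec_or {f g : α → Bool} (hf : Primrec f) (hg : Primrec g) :
    Primrec fun a => f a || g a :=
  (Primrec.cond hf (Primrec.const true) hg).of_eq fun a => by cases f a <;> simp

theorem primrec_and {f g : α → Bool} (hf : Primrec f) (hg : Primrec g) :
    Primrec fun a => f a && g a :=
  (Primrec.cond hf hg (Primrec.const false)).of_eq fun a => by cases f a <;> simp

theorem primrec_not {f : α → Bool} (hf : Primrec f) : Primrec fun a => !(f a) :=
  (Primrec.cond hf (Primrec.const false) (Primrec.const true)).of_eq fun a => by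
    cases f a <;> simp

theorem primrec_bAny {N : α → ℕ} {p : α → ℕ → Bool} (hN : Primrec N) (hp : Primrec₂ p) :
    Primrec fun a => bAny (N a) (p a) := by
  have := Primrec.nat_rec (f := fun _ : α => false)
    (g := fun (a : α) (q : ℕ × Bool) => p a q.1 || q.2) (Primrec.const false)
    (primrec_or (hp.comp Primrec.fst (Primrec.fst.comp Primrec.snd))
      (Primrec.snd.comp Primrec.snd)).to₂
  exact (this.comp Primrec.id hN).of_eq fun a => rfl

theorem primrec_buildL {m : α → ℕ} {F : α → ℕ → β} (hm : Primrec m) (hF : Primrec₂ F) :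
    Primrec fun a => buildL (m a) (F a) := by
  have := Primrec.nat_rec (f := fun _ : α => ([] : List β))
    (g := fun (a : α) (q : ℕ × List β) => q.2 ++ [F a q.1]) (Primrec.const [])
    (Primrec.list_concat.comp (Primrec.snd.comp Primrec.snd)
      (hF.comp Primrec.fst (Primrec.fst.comp Primrec.snd))).to₂
  exact (this.comp Primrec.id hm).of_eq fun a => rfl

theorem primrec_decodeList : Primrec decodeList :=
  Primrec.option_getD.comp (Primrec.decode (α := List ℕ)) (Primrec.const [])

theorem primrec_listGetD {l : α → List ℕ} {i : α → ℕ} (hl : Primrec l) (hi : Primrec i) :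
    Primrec fun a => (l a).getD (i a) 0 :=
  (Primrec.list_getD 0).comp hl hi

theorem primrec_lMax : Primrec fun l : List ℕ => l.foldr max 0 :=
  Primrec.list_foldr Primrec.id (Primrec.const 0)
    (Primrec.nat_max.comp (Primrec.fst.comp Primrec.snd)
      (Primrec.snd.comp Primrec.snd)).to₂

theorem primrec_pow : Primrec₂ (fun a b : ℕ => a ^ b) :=
  Primrec₂.unpaired'.1 Nat.Primrec.pow

end PrimrecHelpers

section ComputableHelpers

variable {α : Type} {β : Type} [Primcodable α] [Primcodable β]

theorem computable_or {f g : α → Bool} (hf : Computable f) (hg : Computable g) :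
    Computable fun a => f a || g a :=
  (Computable.cond hf (Computable.const true) hg).of_eq fun a => by cases f a <;> simp

theorem computable_and {f g : α → Bool} (hf : Computable f) (hg : Computable g) :
    Computable fun a => f a && g a :=
  (Computable.cond hf hg (Computable.const false)).of_eq fun a => by cases f a <;> simp

theorem computable_bAny {N : α → ℕ} {p : α → ℕ → Bool} (hN : Computable N)
    (hp : Computable₂ p) : Computable fun a => bAny (N a) (p a) := by
  have := Computable.nat_rec (f := N)
    (g := fun _ : α => false)
    (h := fun (a : α) (q : ℕ × Bool) => p a q.1 || q.2) hN (Computable.const false)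
    (computable_or (hp.comp Computable.fst (Computable.fst.comp Computable.snd))
      (Computable.snd.comp Computable.snd)).to₂
  exact this.of_eq fun a => rfl

theorem computable_buildL {m : α → ℕ} {F : α → ℕ → β} (hm : Computable m)
    (hF : Computable₂ F) : Computable fun a => buildL (m a) (F a) := by
  have := Computable.nat_rec (f := m)
    (g := fun _ : α => ([] : List β))
    (h := fun (a : α) (q : ℕ × List β) => q.2 ++ [F a q.1]) hm (Computable.const [])
    (Computable.list_concat.comp (Computable.snd.comp Computable.snd)
      (hF.comp Computable.fst (Computable.fst.comp Computable.snd))).to₂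
  exact this.of_eq fun a => rfl

theorem computable_listGetD {l : α → List ℕ} {i : α → ℕ} (hl : Computable l)
    (hi : Computable i) : Computable fun a => (l a).getD (i a) 0 :=
  Computable.option_getD (Computable.list_getElem?.comp hl hi) (Computable.const 0)

theorem computable_listGetDB {l : α → List Bool} {i : α → ℕ} (hl : Computable l)
    (hi : Computable i) : Computable fun a => (l a).getD (i a) false :=
  Computable.option_getD (Computable.list_getElem?.comp hl hi) (Computable.const false)

end ComputableHelpers

/-! ### Initial segment lemmas -/

@[simp] theorem cInit_length (x : Cantor) (n : ℕ) : (x.initSeg n).length = n := by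
  simp [Cantor.initSeg]

@[simp] theorem bInit_length (f : Baire) (n : ℕ) : (f.initSeg n).length = n := by
  simp [Baire.initSeg]

theorem cInit_getD {x : Cantor} {k n : ℕ} (h : k < n) : (x.initSeg n).getD k false = x k := by
  rw [List.getD_eq_getElem _ _ (by simpa using h)]
  simp [Cantor.initSeg]

theorem bInit_getD {f : Baire} {k n : ℕ} (h : k < n) : (f.initSeg n).getD k 0 = f k := by
  rw [List.getD_eq_getElem _ _ (by simpa using h)]
  simp [Baire.initSeg]

theorem cInit_build {x : Cantor} {m n : ℕ} (h : m ≤ n) :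
    buildL m (fun k => (x.initSeg n).getD k false) = x.initSeg m := by
  apply List.ext_getElem (by simp)
  intro i h1 h2
  rw [buildL_getElem _ (by simpa using h1)]
  rw [cInit_getD (lt_of_lt_of_le (by simpa using h1) h)]
  simp [Cantor.initSeg]

theorem bInit_eq_buildL (f : Baire) (n : ℕ) : f.initSeg n = buildL n f := by
  apply List.ext_getElem (by simp)
  intro i h1 h2
  rw [buildL_getElem _ (by simpa using h2)]
  simp [Baire.initSeg]

theorem recOracle_initSeg (n : ℕ) :
    recOracle.initSeg n = buildL n (fun _ => false) := by
  apply List.ext_getElem (by simp)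
  intro i h1 h2
  rw [buildL_getElem _ (by simpa using h2)]
  simp [Cantor.initSeg, recOracle]

/-! ### Basic closure properties of `Pi11NatIn` -/

theorem p11_congr {x : Cantor} {A B : Set ℕ} (h : A = B) (hA : Pi11NatIn x A) :
    Pi11NatIn x B := h ▸ hA

theorem p11_computable {x : Cantor} {p : ℕ → Bool} (hp : Primrec p) :
    Pi11NatIn x {a | p a = true} := by
  refine ⟨fun q => p q.1, (hp.comp Primrec.fst).to_comp, fun a => ?_⟩
  constructor
  · intro ha f
    exact ⟨0, ha⟩
  · intro h
    obtain ⟨n, hn⟩ := h fun _ => 0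
    exact hn

theorem p11_cases {x : Cantor} {A B : Set ℕ} (hA : Pi11NatIn x A) (hB : Pi11NatIn x B)
    {c : ℕ → Bool} {r₁ r₂ : ℕ → ℕ} (hc : Primrec c) (h1 : Primrec r₁) (h2 : Primrec r₂) :
    Pi11NatIn x {a | if c a = true then r₁ a ∈ A else r₂ a ∈ B} := by
  obtain ⟨RA, hRA, hAspec⟩ := hA
  obtain ⟨RB, hRB, hBspec⟩ := hB
  refine ⟨fun q => cond (c q.1) (RA (r₁ q.1, q.2.1, q.2.2)) (RB (r₂ q.1, q.2.1, q.2.2)), ?_,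
    fun a => ?_⟩
  · exact Computable.cond (hc.to_comp.comp Computable.fst)
      (hRA.comp (Computable.pair (h1.to_comp.comp Computable.fst)
        (Computable.pair (Computable.fst.comp Computable.snd)
          (Computable.snd.comp Computable.snd))))
      (hRB.comp (Computable.pair (h2.to_comp.comp Computable.fst)
        (Computable.pair (Computable.fst.comp Computable.snd)
          (Computable.snd.comp Computable.snd))))
  · by_cases hca : c a = true
    · simpa [hca] using hAspec (r₁ a)
    · have hcb : c a = false := by simpa using hca
      simpa [hca, hcb] using hBspec (r₂ a)

theorem p11_rel {x : Cantor} {A : Set ℕ} (h : Pi11NatIn recOracle A) : Pi11NatIn x A := by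
  obtain ⟨R, hR, hspec⟩ := h
  refine ⟨fun q => R (q.1, buildL q.2.1.length (fun _ => false), q.2.2), ?_, fun a => ?_⟩
  · exact hR.comp (Computable.pair Computable.fst (Computable.pair
      ((primrec_buildL (Primrec.list_length.comp (Primrec.fst.comp Primrec.snd))
        ((Primrec.const false).to₂ :
          Primrec₂ fun (_ : ℕ × List Bool × List ℕ) (_ : ℕ) => false)).to_comp)
      (Computable.snd.comp Computable.snd)))
  · rw [hspec a]
    constructor
    · intro h f
      obtain ⟨n, hn⟩ := h f
      refine ⟨n, ?_⟩
      show R (a, buildL (x.initSeg n).length fun _ => false, f.initSeg n) = true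
      rw [cInit_length, ← recOracle_initSeg]
      exact hn
    · intro h f
      obtain ⟨n, hn⟩ := h f
      have hn' : R (a, buildL (x.initSeg n).length fun _ => false, f.initSeg n) = true := hn
      rw [cInit_length, ← recOracle_initSeg] at hn'
      exact ⟨n, hn'⟩

/-- Monotonicity of `Nat.pair` in the right argument. -/
theorem pair_le_pair_right (a : ℕ) {b c : ℕ} (h : b ≤ c) : Nat.pair a b ≤ Nat.pair a c := by
  rcases eq_or_lt_of_le h with rfl | h
  · exact le_rfl
  · exact (Nat.pair_lt_pair_right a h).le

/-- The master closure lemma: `Π¹₁(x)` sets are closed under the quantifier pattern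
`∀ c ∃ i < K(a,c), ρ(a,c,i) ∈ T`. -/
theorem master {x : Cantor} {T : Set ℕ} (hT : Pi11NatIn x T)
    {K : ℕ × ℕ → ℕ} (hK : Primrec K) {ρ : ℕ × ℕ × ℕ → ℕ} (hρ : Primrec ρ) :
    Pi11NatIn x {a | ∀ c : ℕ, ∃ i, i < K (a, c) ∧ ρ (a, c, i) ∈ T} := by
  classical
  obtain ⟨R, hR, hspec⟩ := hT
  refine ⟨fun q =>
    decide (0 < q.2.2.length) &&
    bAny (K (q.1, q.2.2.getD 0 0)) (fun i =>
      bAny (q.2.1.length + 1) (fun m =>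
        (decide (m = 0) || decide (Nat.pair i (m - 1) + 1 < q.2.2.length)) &&
        R (ρ (q.1, q.2.2.getD 0 0, i), buildL m (fun k => q.2.1.getD k false),
           buildL m (fun j => q.2.2.getD (Nat.pair i j + 1) 0)))), ?_, fun a => ?_⟩
  · -- computability
    have hhead : Primrec fun q : ℕ × List Bool × List ℕ => q.2.2.getD 0 0 :=
      primrec_listGetD (Primrec.snd.comp Primrec.snd) (Primrec.const 0)
    -- innermost function of w : ((Q × ℕ) × ℕ)
    have hguard : Primrec fun w : ((ℕ × List Bool × List ℕ) × ℕ) × ℕ =>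
        (decide (w.2 = 0) || decide (Nat.pair w.1.2 (w.2 - 1) + 1 < w.1.1.2.2.length)) :=
      primrec_or (Primrec.eq.comp Primrec.snd (Primrec.const 0)).decide
        (Primrec.nat_lt.comp
          (Primrec.succ.comp (Primrec₂.natPair.comp (Primrec.snd.comp Primrec.fst)
            (Primrec.pred.comp Primrec.snd)))
          (Primrec.list_length.comp
            (Primrec.snd.comp (Primrec.snd.comp (Primrec.fst.comp Primrec.fst))))).decide
    have hq : Primrec fun w : ((ℕ × List Bool × List ℕ) × ℕ) × ℕ => w.1.1 :=
      Primrec.fst.comp Primrec.fst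
    have harg : Primrec fun w : ((ℕ × List Bool × List ℕ) × ℕ) × ℕ =>
        (ρ (w.1.1.1, w.1.1.2.2.getD 0 0, w.1.2),
          buildL w.2 (fun k => w.1.1.2.1.getD k false),
          buildL w.2 (fun j => w.1.1.2.2.getD (Nat.pair w.1.2 j + 1) 0)) := by
      refine Primrec.pair ?_ (Primrec.pair ?_ ?_)
      · exact hρ.comp (Primrec.pair (Primrec.fst.comp hq)
          (Primrec.pair (hhead.comp hq) (Primrec.snd.comp Primrec.fst)))
      · exact primrec_buildL Primrec.snd
          ((Primrec.list_getD false).comp₂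
            ((Primrec.fst.comp (Primrec.snd.comp hq)).comp Primrec.fst)
            Primrec.snd)
      · exact primrec_buildL Primrec.snd
          (((Primrec.list_getD 0).comp
              ((Primrec.snd.comp (Primrec.snd.comp hq)).comp Primrec.fst)
              (Primrec.succ.comp (Primrec₂.natPair.comp
                ((Primrec.snd.comp Primrec.fst).comp Primrec.fst) Primrec.snd))).to₂)
    have hin2 : Computable fun w : ((ℕ × List Bool × List ℕ) × ℕ) × ℕ =>
        ((decide (w.2 = 0) || decide (Nat.pair w.1.2 (w.2 - 1) + 1 < w.1.1.2.2.length)) &&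
          R (ρ (w.1.1.1, w.1.1.2.2.getD 0 0, w.1.2),
            buildL w.2 (fun k => w.1.1.2.1.getD k false),
            buildL w.2 (fun j => w.1.1.2.2.getD (Nat.pair w.1.2 j + 1) 0))) := by
      have := Computable.cond hguard.to_comp (hR.comp harg.to_comp)
        (Computable.const false)
      exact this.of_eq fun w => by cases hg : (decide (w.2 = 0) || _) <;> simp [hg]
    have hin1 : Computable fun z : (ℕ × List Bool × List ℕ) × ℕ =>
        bAny (z.1.2.1.length + 1) (fun m =>
          (decide (m = 0) || decide (Nat.pair z.2 (m - 1) + 1 < z.1.2.2.length)) &&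
          R (ρ (z.1.1, z.1.2.2.getD 0 0, z.2), buildL m (fun k => z.1.2.1.getD k false),
             buildL m (fun j => z.1.2.2.getD (Nat.pair z.2 j + 1) 0))) := by
      exact computable_bAny
        ((Primrec.succ.comp (Primrec.list_length.comp
          (Primrec.fst.comp (Primrec.snd.comp Primrec.fst)))).to_comp)
        hin2.to₂
    have htop : Computable fun q : ℕ × List Bool × List ℕ =>
        bAny (K (q.1, q.2.2.getD 0 0)) (fun i =>
          bAny (q.2.1.length + 1) (fun m =>
            (decide (m = 0) || decide (Nat.pair i (m - 1) + 1 < q.2.2.length)) &&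
            R (ρ (q.1, q.2.2.getD 0 0, i), buildL m (fun k => q.2.1.getD k false),
               buildL m (fun j => q.2.2.getD (Nat.pair i j + 1) 0)))) := by
      exact computable_bAny
        ((hK.comp (Primrec.pair Primrec.fst hhead)).to_comp)
        hin1.to₂
    have hlen : Primrec fun q : ℕ × List Bool × List ℕ => decide (0 < q.2.2.length) :=
      (Primrec.nat_lt.comp (Primrec.const 0)
        (Primrec.list_length.comp (Primrec.snd.comp Primrec.snd))).decide
    exact ((Computable.cond hlen.to_comp htop (Computable.const false)).of_eq fun q => by
      cases hg : decide (0 < q.2.2.length) <;> simp [hg])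
  · -- correctness
    constructor
    · -- membership implies the normal form
      intro ha F
      set c := F 0 with hc
      obtain ⟨i, hiK, hiT⟩ := ha c
      set fi : Baire := fun j => F (Nat.pair i j + 1) with hfi
      obtain ⟨n, hn⟩ := (hspec _).1 hiT fi
      set N := Nat.pair i n + 2 with hN
      have hnN : n ≤ N := le_trans (Nat.right_le_pair i n) (by omega)
      have hhead : (F.initSeg N).getD 0 0 = c := by
        rw [bInit_getD (by omega : (0:ℕ) < N)]
      refine ⟨N, ?_⟩
      show (decide (0 < (F.initSeg N).length) &&
        bAny (K (a, (F.initSeg N).getD 0 0)) (fun i =>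
          bAny ((x.initSeg N).length + 1) (fun m =>
            (decide (m = 0) || decide (Nat.pair i (m - 1) + 1 < (F.initSeg N).length)) &&
            R (ρ (a, (F.initSeg N).getD 0 0, i),
               buildL m (fun k => (x.initSeg N).getD k false),
               buildL m (fun j => (F.initSeg N).getD (Nat.pair i j + 1) 0))))) = true
      rw [hhead, cInit_length, bInit_length, Bool.and_eq_true, decide_eq_true_eq]
      refine ⟨by omega, ?_⟩
      rw [bAny_iff]
      refine ⟨i, hiK, ?_⟩
      rw [bAny_iff]
      refine ⟨n, by omega, ?_⟩
      rw [Bool.and_eq_true]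
      refine ⟨?_, ?_⟩
      · rcases Nat.eq_zero_or_pos n with rfl | hpos
        · simp
        · rw [Bool.or_eq_true]
          right
          rw [decide_eq_true_eq]
          have : Nat.pair i (n - 1) < Nat.pair i n := Nat.pair_lt_pair_right i (by omega)
          omega
      · have e1 : buildL n (fun k => (x.initSeg N).getD k false) = x.initSeg n :=
          cInit_build hnN
        have e2 : buildL n (fun j => (F.initSeg N).getD (Nat.pair i j + 1) 0) =
            buildL n fi := by
          apply List.ext_getElem (by simp)
          intro j h1 h2
          rw [buildL_getElem _ (by simpa using h1), buildL_getElem _ (by simpa using h2)]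
          rw [bInit_getD]
          have hjn : j < n := by simpa using h2
          have : Nat.pair i j ≤ Nat.pair i n := pair_le_pair_right i hjn.le
          omega
        rw [e1, e2, ← bInit_eq_buildL]
        exact hn
    · -- the normal form implies membership
      intro hall c
      by_contra hno
      push_neg at hno
      have hch : ∀ i : ℕ, ∃ fi : Baire, i < K (a, c) →
          ∀ n, ¬(R (ρ (a, c, i), x.initSeg n, fi.initSeg n) = true) := by
        intro i
        by_cases hi : i < K (a, c)
        · have hT' := hno i hi
          rw [hspec] at hT'
          push_neg at hT'
          obtain ⟨f, hf⟩ := hT'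
          exact ⟨f, fun _ => hf⟩
        · exact ⟨fun _ => 0, fun h => absurd h hi⟩
      choose fs hfs using hch
      set F : Baire := fun k => match k with
        | 0 => c
        | k + 1 => fs k.unpair.1 k.unpair.2 with hF
      obtain ⟨N, hN⟩ := hall F
      have hN' : (decide (0 < (F.initSeg N).length) &&
        bAny (K (a, (F.initSeg N).getD 0 0)) (fun i =>
          bAny ((x.initSeg N).length + 1) (fun m =>
            (decide (m = 0) || decide (Nat.pair i (m - 1) + 1 < (F.initSeg N).length)) &&
            R (ρ (a, (F.initSeg N).getD 0 0, i),
               buildL m (fun k => (x.initSeg N).getD k false),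
               buildL m (fun j => (F.initSeg N).getD (Nat.pair i j + 1) 0))))) = true := hN
      rw [bInit_length, cInit_length, Bool.and_eq_true, decide_eq_true_eq] at hN'
      obtain ⟨hNpos, hN'⟩ := hN'
      have hhead : (F.initSeg N).getD 0 0 = c := by
        rw [bInit_getD hNpos]
      rw [hhead, bAny_iff] at hN'
      obtain ⟨i, hiK, hN'⟩ := hN'
      rw [bAny_iff] at hN'
      obtain ⟨m, hm, hN'⟩ := hN'
      rw [Bool.and_eq_true] at hN'
      obtain ⟨hguard, hmain⟩ := hN'
      have hjlt : ∀ j < m, Nat.pair i j + 1 < N := by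
        intro j hj
        rw [Bool.or_eq_true, decide_eq_true_eq, decide_eq_true_eq] at hguard
        rcases hguard with h0 | hlt
        · omega
        · have : Nat.pair i j ≤ Nat.pair i (m - 1) := pair_le_pair_right i (by omega)
          omega
      have e1 : buildL m (fun k => (x.initSeg N).getD k false) = x.initSeg m :=
        cInit_build (by omega)
      have e2 : buildL m (fun j => (F.initSeg N).getD (Nat.pair i j + 1) 0) =
          buildL m (fs i) := by
        apply List.ext_getElem (by simp)
        intro j h1 h2
        rw [buildL_getElem _ (by simpa using h1), buildL_getElem _ (by simpa using h2)]
        rw [bInit_getD (hjlt j (by simpa using h2))]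
        show fs (Nat.pair i j).unpair.1 (Nat.pair i j).unpair.2 = fs i j
        rw [Nat.unpair_pair]
      rw [e1, e2, ← bInit_eq_buildL] at hmain
      exact hfs i hiK m hmain

/-! ### The mid-level closure lemma -/

/-- If `u ≤_h x` (as a function) then any set whose membership is computed by a computable
predicate from finitely many values of `u` (one value at a computable argument, plus all values
on an initial segment whose length is computable from the input and that value) is `Π¹₁(x)`. -/
theorem mid2set {x : Cantor} {u : ℕ → ℕ} (hu : HypLEFun u x) {t : ℕ → ℕ} {V : ℕ × ℕ → ℕ}
    {φ : ℕ × ℕ × List ℕ → Bool} (ht : Primrec t) (hV : Primrec V) (hφ : Primrec φ) :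
    Pi11NatIn x {a | φ (a, u (t a), (List.range (V (a, u (t a)))).map u) = true} := by
  classical
  obtain ⟨-, hNeg⟩ := hu
  have hBset : Pi11NatIn x {b : ℕ | decide (b = 1) = true} :=
    p11_computable (Primrec.eq.comp Primrec.id (Primrec.const 1)).decide
  set T : Set ℕ := {q : ℕ | if decide (q.unpair.1 = 0) = true then
      q.unpair.2 ∈ {p : ℕ | u p.unpair.1 ≠ p.unpair.2}
      else q.unpair.2 ∈ {b : ℕ | decide (b = 1) = true}} with hTdef
  have hT : Pi11NatIn x T :=
    p11_cases hNeg hBset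
      (Primrec.eq.comp (Primrec.fst.comp Primrec.unpair) (Primrec.const 0)).decide
      (Primrec.snd.comp Primrec.unpair) (Primrec.snd.comp Primrec.unpair)
  have mem0 : ∀ z : ℕ, (Nat.pair 0 z ∈ T) ↔ u z.unpair.1 ≠ z.unpair.2 := by
    intro z
    rw [hTdef]
    simp [Nat.unpair_pair]
  have mem1 : ∀ z : ℕ, (Nat.pair 1 z ∈ T) ↔ z = 1 := by
    intro z
    rw [hTdef]
    simp [Nat.unpair_pair]
  -- the K and ρ of the master lemma
  have pa : Primrec fun p : ℕ × ℕ × ℕ => p.1 := Primrec.fst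
  have pc : Primrec fun p : ℕ × ℕ × ℕ => p.2.1 := Primrec.fst.comp Primrec.snd
  have pii : Primrec fun p : ℕ × ℕ × ℕ => p.2.2 := Primrec.snd.comp Primrec.snd
  have pw : Primrec fun p : ℕ × ℕ × ℕ => p.2.1.unpair.1 :=
    Primrec.fst.comp (Primrec.unpair.comp pc)
  have pL : Primrec fun p : ℕ × ℕ × ℕ => decodeList p.2.1.unpair.2 :=
    primrec_decodeList.comp (Primrec.snd.comp (Primrec.unpair.comp pc))
  have pV : Primrec fun p : ℕ × ℕ × ℕ => V (p.1, p.2.1.unpair.1) :=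
    hV.comp (pa.pair pw)
  have hKp : Primrec fun p : ℕ × ℕ => V (p.1, p.2.unpair.1) + 2 :=
    Primrec.succ.comp (Primrec.succ.comp (hV.comp (Primrec.pair Primrec.fst
      (Primrec.fst.comp (Primrec.unpair.comp Primrec.snd)))))
  have hρp : Primrec fun p : ℕ × ℕ × ℕ =>
      if p.2.2 < V (p.1, p.2.1.unpair.1) then
        Nat.pair 0 (Nat.pair p.2.2 ((decodeList p.2.1.unpair.2).getD p.2.2 0))
      else if p.2.2 = V (p.1, p.2.1.unpair.1) then
        Nat.pair 0 (Nat.pair (t p.1) p.2.1.unpair.1)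
      else
        Nat.pair 1 (cond ((!decide ((decodeList p.2.1.unpair.2).length =
            V (p.1, p.2.1.unpair.1))) ||
          φ (p.1, p.2.1.unpair.1, decodeList p.2.1.unpair.2)) 1 0) := by
    refine Primrec.ite (Primrec.nat_lt.comp pii pV) ?_ ?_
    · exact Primrec₂.natPair.comp (Primrec.const 0)
        (Primrec₂.natPair.comp pii (primrec_listGetD pL pii))
    refine Primrec.ite (Primrec.eq.comp pii pV) ?_ ?_
    · exact Primrec₂.natPair.comp (Primrec.const 0)
        (Primrec₂.natPair.comp (ht.comp pa) pw)
    · refine Primrec₂.natPair.comp (Primrec.const 1) ?_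
      refine Primrec.cond ?_ (Primrec.const 1) (Primrec.const 0)
      exact primrec_or
        (primrec_not (Primrec.eq.comp (Primrec.list_length.comp pL) pV).decide)
        (hφ.comp (pa.pair (pw.pair pL)))
  have H := master hT hKp hρp
  apply p11_congr _ H
  ext a
  simp only [Set.mem_setOf_eq]
  constructor
  · -- normal form implies φ holds on the true values
    intro hall
    set w0 := u (t a) with hw0
    set L0 : List ℕ := (List.range (V (a, w0))).map u with hL0
    obtain ⟨i, hiK, hiT⟩ := hall (Nat.pair w0 (Encodable.encode L0))
    simp only [Nat.unpair_pair, decodeList_encode] at hiK hiT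
    by_contra hφf
    have hφf' : φ (a, w0, L0) = false := Bool.not_eq_true _ ▸ (by simpa using hφf)
    by_cases h1 : i < V (a, w0)
    · rw [if_pos h1, mem0, Nat.unpair_pair] at hiT
      apply hiT
      rw [List.getD_eq_getElem _ _ (by simpa [hL0] using h1)]
      simp [hL0]
    · rw [if_neg h1] at hiT
      by_cases h2 : i = V (a, w0)
      · rw [if_pos h2, mem0, Nat.unpair_pair] at hiT
        exact hiT rfl
      · rw [if_neg h2, mem1] at hiT
        have hlen : L0.length = V (a, w0) := by simp [hL0]
        rw [hlen] at hiT
        simp [hφf'] at hiT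
  · -- φ on the true values implies the normal form
    intro hφt c
    show ∃ i, i < V (a, c.unpair.1) + 2 ∧
      ((if i < V (a, c.unpair.1) then
          Nat.pair 0 (Nat.pair i ((decodeList c.unpair.2).getD i 0))
        else if i = V (a, c.unpair.1) then
          Nat.pair 0 (Nat.pair (t a) c.unpair.1)
        else
          Nat.pair 1 (cond ((!decide ((decodeList c.unpair.2).length = V (a, c.unpair.1))) ||
            φ (a, c.unpair.1, decodeList c.unpair.2)) 1 0)) ∈ T)
    set w := c.unpair.1 with hw
    set L : List ℕ := decodeList c.unpair.2 with hL
    by_cases hwv : u (t a) = w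
    · by_cases hlen : L.length = V (a, w)
      · by_cases hmis : ∃ i, i < V (a, w) ∧ u i ≠ L.getD i 0
        · obtain ⟨i, hi, hne⟩ := hmis
          refine ⟨i, by omega, ?_⟩
          rw [if_pos hi, mem0, Nat.unpair_pair]
          exact hne
        · push_neg at hmis
          have hLeq : L = (List.range (V (a, w))).map u := by
            apply List.ext_getElem (by simpa using hlen)
            intro i hi1 hi2
            have hiV : i < V (a, w) := by simpa using hi2
            have := hmis i hiV
            rw [List.getD_eq_getElem _ _ (by omega : i < L.length)] at this
            simp [← this]
          refine ⟨V (a, w) + 1, by omega, ?_⟩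
          rw [if_neg (by omega), if_neg (by omega), mem1]
          have : φ (a, w, L) = true := by
            rw [hLeq, ← hwv]
            exact hφt
          simp [hlen, this]
      · refine ⟨V (a, w) + 1, by omega, ?_⟩
        rw [if_neg (by omega), if_neg (by omega), mem1]
        simp [hlen]
    · refine ⟨V (a, w), by omega, ?_⟩
      rw [if_neg (by omega), if_pos rfl, mem0, Nat.unpair_pair]
      exact hwv

/-- Main workhorse: if the graph of `g₀` is decided by a computable predicate from values
of a function `u ≤_h x`, then `g₀ ≤_h x`. -/
theorem hypLEFun_of_iff {x : Cantor} {u g₀ : ℕ → ℕ} (hu : HypLEFun u x) {t : ℕ → ℕ}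
    {V : ℕ × ℕ → ℕ} {φ : ℕ × ℕ × List ℕ → Bool} (ht : Primrec t) (hV : Primrec V)
    (hφ : Primrec φ)
    (h : ∀ a : ℕ, g₀ a.unpair.1 = a.unpair.2 ↔
      φ (a, u (t a), (List.range (V (a, u (t a)))).map u) = true) :
    HypLEFun g₀ x := by
  constructor
  · apply p11_congr _ (mid2set hu ht hV hφ)
    ext a
    exact (h a).symm
  · apply p11_congr _ (mid2set hu ht hV (primrec_not hφ))
    ext a
    simp only [Set.mem_setOf_eq, Bool.not_eq_true']
    rw [← Bool.not_eq_true]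
    exact not_congr (h a).symm

/-- Function version: if `g₀` is computed by a computable function from values of `u ≤_h x`,
then `g₀ ≤_h x`. -/
theorem hypLEFun_of_val {x : Cantor} {u g₀ : ℕ → ℕ} (hu : HypLEFun u x) {t : ℕ → ℕ}
    {V : ℕ × ℕ → ℕ} {val : ℕ × ℕ × List ℕ → ℕ} (ht : Primrec t) (hV : Primrec V)
    (hval : Primrec val)
    (h : ∀ n : ℕ, g₀ n = val (n, u (t n), (List.range (V (n, u (t n)))).map u)) :
    HypLEFun g₀ x := by
  apply hypLEFun_of_iff hu (t := fun a => t a.unpair.1)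
    (V := fun p => V (p.1.unpair.1, p.2))
    (φ := fun p => decide (val (p.1.unpair.1, p.2.1, p.2.2) = p.1.unpair.2))
    (ht.comp (Primrec.fst.comp Primrec.unpair))
    (hV.comp (Primrec.pair (Primrec.fst.comp (Primrec.unpair.comp Primrec.fst)) Primrec.snd))
    (Primrec.eq.comp
      (hval.comp (Primrec.pair (Primrec.fst.comp (Primrec.unpair.comp Primrec.fst))
        (Primrec.pair (Primrec.fst.comp Primrec.snd) (Primrec.snd.comp Primrec.snd))))
      (Primrec.snd.comp (Primrec.unpair.comp Primrec.fst))).decide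
  intro a
  rw [h a.unpair.1]
  simp

/-- Pairing two functions reducible to `x` into one. -/
def upair (u₁ u₂ : ℕ → ℕ) : ℕ → ℕ :=
  fun n => if n.unpair.1 = 0 then u₁ n.unpair.2 else u₂ n.unpair.2

@[simp] theorem upair_zero (u₁ u₂ : ℕ → ℕ) (k : ℕ) : upair u₁ u₂ (Nat.pair 0 k) = u₁ k := by
  simp [upair, Nat.unpair_pair]

@[simp] theorem upair_one (u₁ u₂ : ℕ → ℕ) (k : ℕ) : upair u₁ u₂ (Nat.pair 1 k) = u₂ k := by
  simp [upair, Nat.unpair_pair]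

theorem hyp_upair {x : Cantor} {u₁ u₂ : ℕ → ℕ} (h₁ : HypLEFun u₁ x) (h₂ : HypLEFun u₂ x) :
    HypLEFun (upair u₁ u₂) x := by
  constructor
  · apply p11_congr _ (p11_cases h₁.1 h₂.1
      (Primrec.eq.comp (Primrec.fst.comp (Primrec.unpair.comp
        (Primrec.fst.comp Primrec.unpair))) (Primrec.const 0)).decide
      (Primrec₂.natPair.comp (Primrec.snd.comp (Primrec.unpair.comp
        (Primrec.fst.comp Primrec.unpair))) (Primrec.snd.comp Primrec.unpair))
      (Primrec₂.natPair.comp (Primrec.snd.comp (Primrec.unpair.comp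
        (Primrec.fst.comp Primrec.unpair))) (Primrec.snd.comp Primrec.unpair)))
    ext a
    simp only [Set.mem_setOf_eq, Nat.unpair_pair, upair]
    by_cases h : a.unpair.1.unpair.1 = 0 <;> simp [h]
  · apply p11_congr _ (p11_cases h₁.2 h₂.2
      (Primrec.eq.comp (Primrec.fst.comp (Primrec.unpair.comp
        (Primrec.fst.comp Primrec.unpair))) (Primrec.const 0)).decide
      (Primrec₂.natPair.comp (Primrec.snd.comp (Primrec.unpair.comp
        (Primrec.fst.comp Primrec.unpair))) (Primrec.snd.comp Primrec.unpair))
      (Primrec₂.natPair.comp (Primrec.snd.comp (Primrec.unpair.comp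
        (Primrec.fst.comp Primrec.unpair))) (Primrec.snd.comp Primrec.unpair)))
    ext a
    simp only [Set.mem_setOf_eq, Nat.unpair_pair, upair]
    by_cases h : a.unpair.1.unpair.1 = 0 <;> simp [h]

theorem hyp_rel {x : Cantor} {h : ℕ → ℕ} (hh : Delta11Fun h) : HypLEFun h x :=
  ⟨p11_rel hh.1, p11_rel hh.2⟩

/-! ### More helpers -/

/-- Bounded universal as a boolean. -/
def bAll (N : ℕ) (p : ℕ → Bool) : Bool := Nat.rec true (fun i r => p i && r) N

@[simp] theorem bAll_zero {p} : bAll 0 p = true := rfl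
@[simp] theorem bAll_succ {N p} : bAll (N + 1) p = (p N && bAll N p) := rfl

theorem bAll_iff {N : ℕ} {p : ℕ → Bool} : bAll N p = true ↔ ∀ i, i < N → p i = true := by
  induction N with
  | zero => simp
  | succ N ih =>
    simp only [bAll_succ, Bool.and_eq_true, ih]
    constructor
    · rintro ⟨h1, h2⟩ i hi
      rcases Nat.lt_succ_iff_lt_or_eq.1 hi with hi | rfl
      exacts [h2 i hi, h1]
    · intro h
      exact ⟨h N (Nat.lt_succ_self _), fun i hi => h i (hi.trans (Nat.lt_succ_self _))⟩

theorem primrec_bAll {α : Type} [Primcodable α] {N : α → ℕ} {p : α → ℕ → Bool}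
    (hN : Primrec N) (hp : Primrec₂ p) : Primrec fun a => bAll (N a) (p a) := by
  have := Primrec.nat_rec (f := fun _ : α => true)
    (g := fun (a : α) (q : ℕ × Bool) => p a q.1 && q.2) (Primrec.const true)
    (primrec_and (hp.comp Primrec.fst (Primrec.fst.comp Primrec.snd))
      (Primrec.snd.comp Primrec.snd)).to₂
  exact (this.comp Primrec.id hN).of_eq fun a => rfl

/-- A bound on pairs `⟨b, k⟩` with `b ≤ 1`, `k ≤ q`. -/
def bnd (q : ℕ) : ℕ := (q + 2) * (q + 2)

theorem primrec_bnd : Primrec bnd :=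
  Primrec.nat_mul.comp (Primrec.succ.comp Primrec.succ) (Primrec.succ.comp Primrec.succ)

theorem pair_lt_bnd {b k q : ℕ} (hb : b ≤ 1) (hk : k ≤ q) : Nat.pair b k < bnd q := by
  have hsq : (q + 2) * (q + 2) = q * q + 4 * q + 4 := by ring
  have hkk : k * k ≤ q * q := Nat.mul_le_mul hk hk
  unfold Nat.pair bnd
  split
  · omega
  · have : b * b ≤ 1 := by nlinarith
    omega

theorem getD_range_map {u : ℕ → ℕ} {V k : ℕ} (h : k < V) :
    ((List.range V).map u).getD k 0 = u k := by
  rw [List.getD_eq_getElem _ _ (by simpa using h)]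
  simp

/-! ### Facts about the encoding of finite sets -/

theorem encode_finset_empty :
    Encodable.encode (∅ : Finset ℕ) = Encodable.encode ([] : List ℕ) := by
  show encodeMultiset (0 : Multiset ℕ) = _
  unfold encodeMultiset
  rw [Multiset.sort_zero]

theorem encode_finset_singleton (c : ℕ) :
    Encodable.encode ({c} : Finset ℕ) = Encodable.encode [c] := by
  show encodeMultiset ({c} : Multiset ℕ) = _
  unfold encodeMultiset
  rw [Multiset.sort_singleton]

theorem decodeList_encode_finset (s : Finset ℕ) :
    ((decodeList (Encodable.encode s) : List ℕ) : Multiset ℕ) = s.1 := by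
  have h : decodeMultiset (α := ℕ) (Encodable.encode s) = some s.1 := by
    show Encodable.decode (α := Multiset ℕ) (Encodable.encode s) = some s.1
    have he : Encodable.encode s = encodeMultiset s.1 := rfl
    rw [he]
    exact Encodable.encodek s.1
  unfold decodeMultiset at h
  rcases hd : Encodable.decode (α := List ℕ) (Encodable.encode s) with _ | l
  · rw [hd] at h
    simp at h
  · rw [hd] at h
    simp at h
    have hdl : decodeList (Encodable.encode s) = l := by
      unfold decodeList
      rw [hd]
      rfl
    rw [hdl]
    exact h

theorem mem_decodeList_encode_finset {s : Finset ℕ} {a : ℕ} :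
    a ∈ decodeList (Encodable.encode s) ↔ a ∈ s := by
  have := decodeList_encode_finset s
  rw [← Multiset.mem_coe, this]
  rfl

theorem length_decodeList_encode_finset (s : Finset ℕ) :
    (decodeList (Encodable.encode s)).length = s.card := by
  have := decodeList_encode_finset s
  rw [Finset.card_def, ← this]
  simp

/-! ### Iteration of a function -/

def iterF (d : ℕ → ℕ) : ℕ → ℕ
  | 0 => 0
  | n + 1 => d (iterF d n) + iterF d n + 1

theorem iterF_strictMono (d : ℕ → ℕ) : StrictMono (iterF d) :=
  strictMono_nat_of_lt_succ fun n => by simp [iterF]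

/-- The chain simulation function reading values of `d` off a list. -/
def cha (L : List ℕ) (k : ℕ) : ℕ := Nat.rec 0 (fun _ c => L.getD c 0 + c + 1) k

@[simp] theorem cha_zero {L} : cha L 0 = 0 := rfl
@[simp] theorem cha_succ {L k} : cha L (k + 1) = L.getD (cha L k) 0 + cha L k + 1 := rfl

theorem primrec_cha : Primrec₂ cha := by
  have := Primrec.nat_rec (f := fun _ : List ℕ => (0 : ℕ))
    (g := fun (L : List ℕ) (q : ℕ × ℕ) => L.getD q.2 0 + q.2 + 1) (Primrec.const 0)
    (Primrec.succ.comp (Primrec.nat_add.comp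
      (primrec_listGetD Primrec.fst (Primrec.snd.comp Primrec.snd))
      (Primrec.snd.comp Primrec.snd))).to₂
  exact this.of_eq fun L k => rfl

/-- `Δ¹₁`-ness of the iteration `iterF d` of a `Δ¹₁` function `d`. -/
theorem delta11_iterF {d : ℕ → ℕ} (hd : Delta11Fun d) : Delta11Fun (iterF d) := by
  apply hypLEFun_of_iff (u := d) (x := recOracle) hd
    (t := fun _ => 0) (V := fun p => p.1.unpair.2 + 1)
    (φ := fun p => decide (cha p.2.2 p.1.unpair.1 = p.1.unpair.2) &&
      bAll p.1.unpair.1 (fun k => decide (cha p.2.2 k ≤ p.1.unpair.2)))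
    (Primrec.const 0)
    (Primrec.succ.comp (Primrec.snd.comp (Primrec.unpair.comp Primrec.fst)))
    (primrec_and
      (Primrec.eq.comp
        (primrec_cha.comp (Primrec.snd.comp Primrec.snd)
          (Primrec.fst.comp (Primrec.unpair.comp Primrec.fst)))
        (Primrec.snd.comp (Primrec.unpair.comp Primrec.fst))).decide
      (primrec_bAll (Primrec.fst.comp (Primrec.unpair.comp Primrec.fst))
        ((Primrec.nat_le.comp
          (primrec_cha.comp ((Primrec.snd.comp Primrec.snd).comp Primrec.fst) Primrec.snd)
          ((Primrec.snd.comp (Primrec.unpair.comp Primrec.fst)).comp Primrec.fst)).decide.to₂)))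
  intro a
  set n := a.unpair.1 with hn
  set q := a.unpair.2 with hq
  set L : List ℕ := (List.range (q + 1)).map d with hL
  have hLget : ∀ k, k ≤ q → L.getD k 0 = d k := fun k hk => getD_range_map (by omega)
  simp only [Bool.and_eq_true, decide_eq_true_eq, bAll_iff]
  constructor
  · intro hiter
    have mono : ∀ k, k ≤ n → iterF d k ≤ q := fun k hk =>
      hiter ▸ (iterF_strictMono d).monotone hk
    have hch : ∀ k, k ≤ n → cha L k = iterF d k := by
      intro k hk
      induction k with
      | zero => rfl
      | succ k ih =>
        have hk' : k ≤ n := by omega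
        rw [cha_succ, ih hk', hLget _ (mono k hk')]
        rfl
    exact ⟨by rw [hch n le_rfl, hiter], fun k hk => by
      rw [hch k hk.le]; exact mono k hk.le⟩
  · rintro ⟨hc1, hc2⟩
    have hch : ∀ k, k ≤ n → cha L k = iterF d k := by
      intro k hk
      induction k with
      | zero => rfl
      | succ k ih =>
        have hk' : k < n := by omega
        have hik : cha L k = iterF d k := ih hk'.le
        have hle : iterF d k ≤ q := by rw [← hik]; exact hc2 k hk'
        rw [cha_succ, hik, hLget _ hle]
        rfl
    rw [← hch n le_rfl, hc1]

/-! ### The forward direction -/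

theorem stmt15_forward {x : Cantor} (hST : Delta11SemiTraceable x) (hD : Delta11Dominated x)
    {g : ℕ → ℕ} (hg : HypLEFun g x) :
    ∃ f : ℕ → ℕ, ∃ F : ℕ → Finset ℕ,
      Delta11Fun f ∧ StrictMono f ∧ Delta11FinsetFun F ∧ (∀ n, (F n).card ≤ n) ∧
      ∀ n : ℕ, ∃ m : ℕ, f n ≤ m ∧ m < f (n + 1) ∧ g m ∈ F m := by
  classical
  obtain ⟨h, hh, hinf⟩ := hST g hg
  have hne : ∀ p : ℕ, {n | p < n ∧ g n = h n}.Nonempty := by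
    intro p
    obtain ⟨b, hb, hpb⟩ := hinf.exists_gt p
    exact ⟨b, hpb, hb⟩
  set g' : ℕ → ℕ := fun p => sInf {n | p < n ∧ g n = h n} with hg'def
  have hg'mem : ∀ p, p < g' p ∧ g (g' p) = h (g' p) := fun p => Nat.sInf_mem (hne p)
  have hg'min : ∀ p k, p < k → k < g' p → ¬(g k = h k) := by
    intro p k hpk hk hgk
    have hle : g' p ≤ k :=
      Nat.sInf_le (⟨hpk, hgk⟩ : k ∈ {n | p < n ∧ g n = h n})
    omega
  have hspec : ∀ n q : ℕ, g' n = q ↔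
      (n < q ∧ g q = h q ∧ ∀ k, n < k → k < q → ¬(g k = h k)) := by
    intro n q
    constructor
    · rintro rfl
      exact ⟨(hg'mem n).1, (hg'mem n).2, fun k h1 h2 => hg'min n k h1 h2⟩
    · rintro ⟨h1, h2, h3⟩
      have hle : g' n ≤ q := Nat.sInf_le ⟨h1, h2⟩
      rcases lt_or_eq_of_le hle with hlt | heq
      · exact absurd (hg'mem n).2 (h3 _ (hg'mem n).1 hlt)
      · exact heq
  have hu : HypLEFun (upair g h) x := hyp_upair hg (hyp_rel hh)
  have hg' : HypLEFun g' x := by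
    have pn : Primrec fun p : ℕ × ℕ × List ℕ => p.1.unpair.1 :=
      Primrec.fst.comp (Primrec.unpair.comp Primrec.fst)
    have pq : Primrec fun p : ℕ × ℕ × List ℕ => p.1.unpair.2 :=
      Primrec.snd.comp (Primrec.unpair.comp Primrec.fst)
    have pL : Primrec fun p : ℕ × ℕ × List ℕ => p.2.2 :=
      Primrec.snd.comp Primrec.snd
    apply hypLEFun_of_iff hu (t := fun _ => 0) (V := fun p => bnd p.1.unpair.2)
      (φ := fun p =>
        decide (p.1.unpair.1 < p.1.unpair.2) &&
        decide (p.2.2.getD (Nat.pair 0 p.1.unpair.2) 0 =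
          p.2.2.getD (Nat.pair 1 p.1.unpair.2) 0) &&
        bAll p.1.unpair.2 (fun k => (!decide (p.1.unpair.1 < k)) ||
          (!decide (p.2.2.getD (Nat.pair 0 k) 0 = p.2.2.getD (Nat.pair 1 k) 0))))
      (Primrec.const 0)
      (primrec_bnd.comp (Primrec.snd.comp (Primrec.unpair.comp Primrec.fst)))
      (primrec_and (primrec_and
        (Primrec.nat_lt.comp pn pq).decide
        (Primrec.eq.comp
          (primrec_listGetD pL (Primrec₂.natPair.comp (Primrec.const 0) pq))
          (primrec_listGetD pL (Primrec₂.natPair.comp (Primrec.const 1) pq))).decide)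
        (primrec_bAll pq
          ((primrec_or
            (primrec_not (Primrec.nat_lt.comp (pn.comp Primrec.fst) Primrec.snd).decide)
            (primrec_not (Primrec.eq.comp
              (primrec_listGetD (pL.comp Primrec.fst)
                (Primrec₂.natPair.comp (Primrec.const 0) Primrec.snd))
              (primrec_listGetD (pL.comp Primrec.fst)
                (Primrec₂.natPair.comp (Primrec.const 1) Primrec.snd))).decide)).to₂)))
    intro a
    set n := a.unpair.1 with hn
    set q := a.unpair.2 with hq
    set L : List ℕ := (List.range (bnd q)).map (upair g h) with hL
    have e0 : ∀ k, k ≤ q → L.getD (Nat.pair 0 k) 0 = g k := by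
      intro k hk
      rw [hL, getD_range_map (pair_lt_bnd (by norm_num) hk), upair_zero]
    have e1 : ∀ k, k ≤ q → L.getD (Nat.pair 1 k) 0 = h k := by
      intro k hk
      rw [hL, getD_range_map (pair_lt_bnd (by norm_num) hk), upair_one]
    rw [hspec n q]
    simp only [Bool.and_eq_true, Bool.or_eq_true, bAll_iff, Bool.not_eq_true',
      decide_eq_true_eq, decide_eq_false_iff_not]
    constructor
    · rintro ⟨h1, h2, h3⟩
      refine ⟨⟨h1, ?_⟩, ?_⟩
      · rw [e0 q le_rfl, e1 q le_rfl]
        exact h2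
      · intro k hk
        by_cases hnk : n < k
        · right
          rw [e0 k hk.le, e1 k hk.le]
          exact h3 k hnk hk
        · left
          exact hnk
    · rintro ⟨⟨h1, h2⟩, h3⟩
      refine ⟨h1, ?_, ?_⟩
      · rw [e0 q le_rfl, e1 q le_rfl] at h2
        exact h2
      · intro k hnk hkq hgh
        rcases h3 k hkq with hc | hc
        · exact hc hnk
        · rw [e0 k hkq.le, e1 k hkq.le] at hc
          exact hc hgh
  obtain ⟨d, hd, hdom⟩ := hD g' hg'
  refine ⟨iterF d, fun m => if m = 0 then ∅ else {h m}, delta11_iterF hd, iterF_strictMono d,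
    ?_, ?_, ?_⟩
  · -- Δ¹₁-ness of the trace
    show Delta11Fun fun e => Encodable.encode (if e = 0 then (∅ : Finset ℕ) else {h e})
    apply hypLEFun_of_val (x := recOracle) (u := h) hh (t := id) (V := fun _ => 0)
      (val := fun p => if p.1 = 0 then Encodable.encode (∅ : Finset ℕ)
        else Encodable.encode [p.2.1])
      Primrec.id (Primrec.const 0)
      (Primrec.ite (Primrec.eq.comp Primrec.fst (Primrec.const 0))
        (Primrec.const _)
        (Primrec.encode.comp (Primrec.list_cons.comp (Primrec.fst.comp Primrec.snd)
          (Primrec.const []))))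
    intro n
    by_cases hn : n = 0
    · simp [hn]
    · simp only [hn, if_false, id]
      exact encode_finset_singleton (h n)
  · -- cardinality bound
    intro n
    by_cases hn : n = 0
    · simp [hn]
    · simp only [hn, if_false]
      rw [Finset.card_singleton]
      omega
  · -- the hitting property
    intro n
    refine ⟨g' (iterF d n), (hg'mem (iterF d n)).1.le, ?_, ?_⟩
    · have h1 : g' (iterF d n) < d (iterF d n) := hdom (iterF d n)
      have h2 : iterF d (n + 1) = d (iterF d n) + iterF d n + 1 := rfl
      omega
    · have hm0 : g' (iterF d n) ≠ 0 := by
        have := (hg'mem (iterF d n)).1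
        omega
      simpa [hm0] using (hg'mem (iterF d n)).2

/-! ### The backward direction -/

theorem le_foldr_max {l : List ℕ} {a : ℕ} (h : a ∈ l) : a ≤ l.foldr max 0 := by
  induction l with
  | nil => cases h
  | cons b t ih =>
    rcases List.mem_cons.1 h with rfl | h
    · exact le_max_left _ _
    · exact le_trans (ih h) (le_max_right _ _)

theorem primrec_mx : Primrec fun c => (decodeList c).foldr max 0 :=
  primrec_lMax.comp primrec_decodeList

theorem stmt15_backward_dom {x : Cantor}
    (hR : ∀ g : ℕ → ℕ, HypLEFun g x →
      ∃ f : ℕ → ℕ, ∃ F : ℕ → Finset ℕ,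
        Delta11Fun f ∧ StrictMono f ∧ Delta11FinsetFun F ∧ (∀ n, (F n).card ≤ n) ∧
        ∀ n : ℕ, ∃ m : ℕ, f n ≤ m ∧ m < f (n + 1) ∧ g m ∈ F m) :
    Delta11Dominated x := by
  intro f₀ hf₀
  set G : ℕ → ℕ := fun m => ((List.range (m + 1)).map f₀).foldr max 0 with hG
  have hGle : ∀ k m, k ≤ m → f₀ k ≤ G m := by
    intro k m hk
    exact le_foldr_max (List.mem_map_of_mem (List.mem_range.2 (by omega)))
  have hGhyp : HypLEFun G x := by
    apply hypLEFun_of_val hf₀ (t := fun _ => 0) (V := fun p => p.1 + 1)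
      (val := fun p => p.2.2.foldr max 0) (Primrec.const 0) (Primrec.succ.comp Primrec.fst)
      (primrec_lMax.comp (Primrec.snd.comp Primrec.snd))
    intro n
    rfl
  obtain ⟨f, F, hfΔ, hfM, hFΔ, hcard, hhit⟩ := hR G hGhyp
  set Fe : ℕ → ℕ := fun e => Encodable.encode (F e) with hFe
  have hFeΔ : Delta11Fun Fe := hFΔ
  set mx : ℕ → ℕ := fun c => (decodeList c).foldr max 0 with hmx
  set dd : ℕ → ℕ :=
    fun k => 1 + ((List.range (f (k + 2))).map (fun m => mx (Fe m))).foldr max 0 with hdd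
  have hddΔ : Delta11Fun dd := by
    apply hypLEFun_of_val (u := upair f Fe) (hyp_upair hfΔ hFeΔ)
      (t := fun n => Nat.pair 0 (n + 2)) (V := fun p => bnd p.2)
      (val := fun p => 1 + ((List.range p.2.1).map
        (fun m => mx (p.2.2.getD (Nat.pair 1 m) 0))).foldr max 0)
      (Primrec₂.natPair.comp (Primrec.const 0) (Primrec.succ.comp (Primrec.succ.comp Primrec.id)))
      (primrec_bnd.comp Primrec.snd)
      (Primrec.nat_add.comp (Primrec.const 1) (primrec_lMax.comp
        (Primrec.list_map (Primrec.list_range.comp (Primrec.fst.comp Primrec.snd))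
          ((primrec_mx.comp (primrec_listGetD
            ((Primrec.snd.comp Primrec.snd).comp Primrec.fst)
            (Primrec₂.natPair.comp (Primrec.const 1) Primrec.snd))).to₂))))
    intro n
    have h1 : upair f Fe (Nat.pair 0 (n + 2)) = f (n + 2) := upair_zero f Fe (n + 2)
    simp only [h1]
    have e : (List.range (f (n + 2))).map
        (fun m => mx (((List.range (bnd (f (n + 2)))).map (upair f Fe)).getD (Nat.pair 1 m) 0))
        = (List.range (f (n + 2))).map (fun m => mx (Fe m)) := by
      apply List.map_congr_left
      intro m hm
      have hmlt : m < f (n + 2) := List.mem_range.1 hm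
      rw [getD_range_map (pair_lt_bnd le_rfl hmlt.le), upair_one]
    rw [e]
  refine ⟨dd, hddΔ, fun k => ?_⟩
  obtain ⟨m, hm1, hm2, hm3⟩ := hhit (k + 1)
  have hkm : k ≤ m := le_trans (le_trans (Nat.le_succ k) hfM.le_apply) hm1
  have h1 : f₀ k ≤ G m := hGle k m hkm
  have h2 : G m ≤ mx (Fe m) :=
    le_foldr_max (mem_decodeList_encode_finset.2 hm3)
  have h3 : mx (Fe m) ≤ ((List.range (f (k + 2))).map (fun m => mx (Fe m))).foldr max 0 :=
    le_foldr_max (List.mem_map_of_mem (List.mem_range.2 hm2))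
  have : dd k = 1 + ((List.range (f (k + 2))).map (fun m => mx (Fe m))).foldr max 0 := rfl
  omega

/-! Block structure for the semi-traceability argument. -/

def blockOK (j m : ℕ) : Bool :=
  decide (1 ≤ m) && decide (2 ^ (m - 1) ≤ j) && decide (j < 2 ^ (m - 1) + m)

theorem primrec_blockOK : Primrec₂ blockOK := by
  have hpw : Primrec fun p : ℕ × ℕ => 2 ^ (p.2 - 1) :=
    primrec_pow.comp (Primrec.const 2) (Primrec.pred.comp Primrec.snd)
  exact (primrec_and (primrec_and
    (Primrec.nat_le.comp (Primrec.const 1) Primrec.snd).decide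
    (Primrec.nat_le.comp hpw Primrec.fst).decide)
    (Primrec.nat_lt.comp Primrec.fst (Primrec.nat_add.comp hpw Primrec.snd)).decide).to₂

theorem two_pow_block_le {m : ℕ} (hm : 1 ≤ m) : m ≤ 2 ^ (m - 1) := by
  have := Nat.lt_two_pow_self (n := m - 1)
  omega

theorem blockOK_unique {j m m' : ℕ} (h : blockOK j m = true) (h' : blockOK j m' = true) :
    m = m' := by
  simp only [blockOK, Bool.and_eq_true, decide_eq_true_eq] at h h'
  obtain ⟨⟨hm1, hm2⟩, hm3⟩ := h
  obtain ⟨⟨hm1', hm2'⟩, hm3'⟩ := h'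
  have key : ∀ {a b : ℕ}, 1 ≤ a → j < 2 ^ (a - 1) + a → 2 ^ (b - 1) ≤ j → a < b → False := by
    intro a b ha h3 h2' hab
    have e1 : 2 ^ (a - 1) + a ≤ 2 ^ a := by
      have hp : 2 ^ a = 2 ^ (a - 1) * 2 := by
        rw [← pow_succ]
        congr 1
        omega
      have := two_pow_block_le ha
      omega
    have e2 : (2 : ℕ) ^ a ≤ 2 ^ (b - 1) := Nat.pow_le_pow_right (by norm_num) (by omega)
    omega
  by_contra hne
  rcases Nat.lt_or_ge m m' with hlt | hge
  · exact key hm1 hm3 hm2' hlt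
  · exact key hm1' hm3' hm2 (by omega)

theorem foldr_pick {l : List ℕ} {p : ℕ → Bool} {m₀ : ℕ} (hm : p m₀ = true) (hmem : m₀ ∈ l)
    (huniq : ∀ m, p m = true → m = m₀) :
    l.foldr (fun m r => cond (p m) m r) 0 = m₀ := by
  induction l with
  | nil => cases hmem
  | cons b t ih =>
    by_cases hb : p b = true
    · simp only [List.foldr_cons, hb, cond_true]
      exact huniq b hb
    · have hb' : p b = false := by simpa using hb
      have hbm : b ≠ m₀ := fun e => hb (e ▸ hm)
      have hmem' : m₀ ∈ t := by
        rcases List.mem_cons.1 hmem with rfl | h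
        · exact absurd rfl hbm
        · exact h
      simp only [List.foldr_cons, hb', cond_false]
      exact ih hmem'

/-- Find the block index: the unique `m` with `blockOK j m`, if any. -/
def blockFind (j : ℕ) : ℕ :=
  (List.range (j + 2)).foldr (fun m r => cond (blockOK j m) m r) 0

theorem primrec_blockFind : Primrec blockFind := by
  have h := Primrec.list_foldr (f := fun j : ℕ => List.range (j + 2))
    (g := fun _ : ℕ => (0 : ℕ))
    (h := fun (j : ℕ) (p : ℕ × ℕ) => cond (blockOK j p.1) p.1 p.2)
    (Primrec.list_range.comp (Primrec.succ.comp Primrec.succ)) (Primrec.const 0)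
    ((Primrec.cond (primrec_blockOK.comp Primrec.fst (Primrec.fst.comp Primrec.snd))
      (Primrec.fst.comp Primrec.snd) (Primrec.snd.comp Primrec.snd)).to₂)
  exact h.of_eq fun j => rfl

theorem blockFind_spec {m i : ℕ} (hm : 1 ≤ m) (hi : i < m) :
    blockFind (2 ^ (m - 1) + i) = m := by
  set j := 2 ^ (m - 1) + i with hj
  have hok : blockOK j m = true := by
    simp only [blockOK, Bool.and_eq_true, decide_eq_true_eq]
    omega
  apply foldr_pick hok
  · apply List.mem_range.2
    have := two_pow_block_le hm
    omega
  · intro m' hm'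
    exact blockOK_unique hm' hok

theorem stmt15_backward_semi {x : Cantor}
    (hR : ∀ g : ℕ → ℕ, HypLEFun g x →
      ∃ f : ℕ → ℕ, ∃ F : ℕ → Finset ℕ,
        Delta11Fun f ∧ StrictMono f ∧ Delta11FinsetFun F ∧ (∀ n, (F n).card ≤ n) ∧
        ∀ n : ℕ, ∃ m : ℕ, f n ≤ m ∧ m < f (n + 1) ∧ g m ∈ F m) :
    Delta11SemiTraceable x := by
  intro g₀ hg₀
  set G : ℕ → ℕ := fun m => Encodable.encode ((List.range (2 ^ m + 1)).map g₀) with hG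
  have hGhyp : HypLEFun G x := by
    apply hypLEFun_of_val hg₀ (t := fun _ => 0) (V := fun p => 2 ^ p.1 + 1)
      (val := fun p => Encodable.encode p.2.2) (Primrec.const 0)
      (Primrec.succ.comp (primrec_pow.comp (Primrec.const 2) Primrec.fst))
      (Primrec.encode.comp (Primrec.snd.comp Primrec.snd))
    intro n
    rfl
  obtain ⟨f, F, hfΔ, hfM, hFΔ, hcard, hhit⟩ := hR G hGhyp
  set Fe : ℕ → ℕ := fun e => Encodable.encode (F e) with hFe
  have hFeΔ : Delta11Fun Fe := hFΔ
  set hS : ℕ → ℕ := fun j => if blockFind j = 0 then 0 else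
    (decodeList ((decodeList (Fe (blockFind j))).getD (j - 2 ^ (blockFind j - 1)) 0)).getD j 0
    with hhS
  have hSΔ : Delta11Fun hS := by
    apply hypLEFun_of_val (u := Fe) hFeΔ (t := blockFind) (V := fun _ => 0)
      (val := fun p => if blockFind p.1 = 0 then 0 else
        (decodeList ((decodeList p.2.1).getD (p.1 - 2 ^ (blockFind p.1 - 1)) 0)).getD p.1 0)
      primrec_blockFind (Primrec.const 0) ?_
    · intro n
      rfl
    · refine Primrec.ite (Primrec.eq.comp (primrec_blockFind.comp Primrec.fst)
        (Primrec.const 0)) (Primrec.const 0) ?_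
      refine primrec_listGetD ?_ Primrec.fst
      refine primrec_decodeList.comp ?_
      refine primrec_listGetD (primrec_decodeList.comp (Primrec.fst.comp Primrec.snd)) ?_
      exact Primrec.nat_sub.comp Primrec.fst
        (primrec_pow.comp (Primrec.const 2)
          (Primrec.pred.comp (primrec_blockFind.comp Primrec.fst)))
  refine ⟨hS, hSΔ, ?_⟩
  apply Set.infinite_of_forall_exists_gt
  intro a
  obtain ⟨m, hm1, hm2, hm3⟩ := hhit (a + 2)
  have hma : a + 2 ≤ m := le_trans hfM.le_apply hm1
  have hmem : G m ∈ decodeList (Fe m) := mem_decodeList_encode_finset.2 hm3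
  obtain ⟨i, hilen, hieq⟩ := List.mem_iff_getElem.1 hmem
  have hilt : i < m := by
    have hlen : (decodeList (Fe m)).length = (F m).card := length_decodeList_encode_finset (F m)
    have := hcard m
    omega
  set j := 2 ^ (m - 1) + i with hj
  have hbf : blockFind j = m := blockFind_spec (by omega) hilt
  have hjm : j ≤ 2 ^ m := by
    have h1 : m ≤ 2 ^ (m - 1) := two_pow_block_le (by omega)
    have h2 : 2 ^ m = 2 ^ (m - 1) * 2 := by
      rw [← pow_succ]
      congr 1
      omega
    omega
  have hSj : hS j = g₀ j := by
    rw [hhS]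
    simp only [hbf]
    rw [if_neg (by omega)]
    have e1 : j - 2 ^ (m - 1) = i := by omega
    rw [e1, List.getD_eq_getElem _ _ hilen, hieq, hG]
    rw [decodeList_encode]
    exact getD_range_map (by omega)
  refine ⟨j, hSj.symm, ?_⟩
  have : m ≤ 2 ^ (m - 1) := two_pow_block_le (by omega)
  omega

end S15

/-- `x` is `Δ¹₁`-semi-traceable and `Δ¹₁`-dominated iff for every `g ≤_h x`
there are an increasing `Δ¹₁` function `f` and a `Δ¹₁` function `F : ω → [ω]^{<ω}` with
`|F(n)| ≤ n` such that every interval `[f(n), f(n+1))` contains some `m` with `g(m) ∈ F(m)`. -/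
theorem stmt15 (x : Cantor) :
    (Delta11SemiTraceable x ∧ Delta11Dominated x) ↔
      ∀ g : ℕ → ℕ, HypLEFun g x →
        ∃ f : ℕ → ℕ, ∃ F : ℕ → Finset ℕ,
          Delta11Fun f ∧ StrictMono f ∧ Delta11FinsetFun F ∧ (∀ n, (F n).card ≤ n) ∧
          ∀ n : ℕ, ∃ m : ℕ, f n ≤ m ∧ m < f (n + 1) ∧ g m ∈ F m := by
  constructor
  · rintro ⟨hST, hD⟩ g hg
    exact S15.stmt15_forward hST hD hg
  · intro hR
    exact ⟨S15.stmt15_backward_semi hR, S15.stmt15_backward_dom hR⟩
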